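/- (Convexity of the discrete energy.) Let n ≥ 1, let A be a symmetric positive definite real n × n matrix, b ∈ ℝⁿ, and for each m let g_m : ℝ → ℝ be continuous and monotone nonincreasing (antitone). Define E : ℝⁿ → ℝ by E(η) = ½ ηᵀAη − Σ_{m=1}^n ∫₀^{η_m} g_m(s) ds − bᵀη. Then E is strictly convex on ℝⁿ. -/

import Mathlib

open scoped BigOperators
open Matrix

/-- The quadratic form of a positive definite real matrix is strictly convex. -/
lemma quad_strictConvexOn {n : ℕ} (A : Matrix (Fin n) (Fin n) ℝ) (hA : A.PosDef) :
    StrictConvexOn ℝ Set.univ (fun η : Fin n → ℝ => (1 / 2) * (η ⬝ᵥ A.mulVec η)) := by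
  have hAt : Aᵀ = A := by
    rw [← Matrix.conjTranspose_eq_transpose_of_trivial]; exact hA.1
  have hsym : ∀ u v : Fin n → ℝ, u ⬝ᵥ A.mulVec v = v ⬝ᵥ A.mulVec u := by
    intro u v
    rw [Matrix.dotProduct_mulVec, ← Matrix.mulVec_transpose, hAt, dotProduct_comm]
  refine ⟨convex_univ, ?_⟩
  intro x _ y _ hxy a c ha hc hac
  have hpos : 0 < (x - y) ⬝ᵥ A.mulVec (x - y) := by
    have := hA.dotProduct_mulVec_pos (sub_ne_zero.mpr hxy)
    simpa using this
  have hexp : (x - y) ⬝ᵥ A.mulVec (x - y)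
      = x ⬝ᵥ A.mulVec x - 2 * (x ⬝ᵥ A.mulVec y) + y ⬝ᵥ A.mulVec y := by
    simp only [Matrix.mulVec_sub, dotProduct_sub, sub_dotProduct]
    rw [hsym y x]; ring
  have hmix : (a • x + c • y) ⬝ᵥ A.mulVec (a • x + c • y)
      = a * a * (x ⬝ᵥ A.mulVec x) + 2 * (a * c) * (x ⬝ᵥ A.mulVec y)
        + c * c * (y ⬝ᵥ A.mulVec y) := by
    simp only [Matrix.mulVec_add, Matrix.mulVec_smul, dotProduct_add, add_dotProduct,
      dotProduct_smul, smul_dotProduct, smul_eq_mul]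
    rw [hsym y x]; ring
  have key : a * ((1 / 2) * (x ⬝ᵥ A.mulVec x)) + c * ((1 / 2) * (y ⬝ᵥ A.mulVec y))
      - (1 / 2) * (a * a * (x ⬝ᵥ A.mulVec x) + 2 * (a * c) * (x ⬝ᵥ A.mulVec y)
        + c * c * (y ⬝ᵥ A.mulVec y))
      = (1 / 2) * (a * c) * ((x - y) ⬝ᵥ A.mulVec (x - y)) := by
    rw [hexp]
    linear_combination (-(1 / 2) * (a * (x ⬝ᵥ A.mulVec x) + c * (y ⬝ᵥ A.mulVec y))) * hac
  simp only [smul_eq_mul]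
  rw [hmix]
  have h2 : 0 < (1 / 2) * (a * c) * ((x - y) ⬝ᵥ A.mulVec (x - y)) := by
    have := mul_pos (mul_pos ha hc) hpos
    linarith
  linarith [key, h2]

/-- Minus the primitive of a continuous antitone function is convex. -/
lemma neg_primitive_convexOn {g : ℝ → ℝ} (hcont : Continuous g) (hanti : Antitone g) :
    ConvexOn ℝ Set.univ (fun x : ℝ => -∫ s in (0 : ℝ)..x, g s) := by
  have hdiff : Differentiable ℝ (fun x : ℝ => ∫ s in (0 : ℝ)..x, g s) := fun x =>
    ((hcont.integral_hasStrictDerivAt 0 x).hasDerivAt).differentiableAt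
  have hderiv : deriv (fun x : ℝ => -∫ s in (0 : ℝ)..x, g s) = fun x => -g x := by
    funext x
    rw [deriv.fun_neg, Continuous.deriv_integral g hcont]
  have hmono : Monotone (deriv (fun x : ℝ => -∫ s in (0 : ℝ)..x, g s)) := by
    rw [hderiv]; exact fun u v huv => neg_le_neg (hanti huv)
  exact Monotone.convexOn_univ_of_deriv hdiff.neg hmono

/-- convexity of the discrete energy: with `A` symmetric positive
definite and each `g_m` continuous and nonincreasing, the energy
`E(η) = ½ ηᵀAη − ∑ m, ∫₀^{η_m} g_m(s) ds − bᵀη` is strictly convex on `ℝⁿ`. -/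
theorem discrete_energy_strictConvex
    (n : ℕ) (hn : 1 ≤ n) (A : Matrix (Fin n) (Fin n) ℝ) (hA : A.PosDef)
    (b : Fin n → ℝ) (g : Fin n → ℝ → ℝ)
    (hcont : ∀ m, Continuous (g m))
    (hanti : ∀ m, Antitone (g m)) :
    StrictConvexOn ℝ Set.univ
      (fun η : Fin n → ℝ =>
        (1 / 2) * (η ⬝ᵥ A.mulVec η) - (∑ m, ∫ s in (0 : ℝ)..(η m), g m s) - b ⬝ᵥ η) := by
  have hquad := quad_strictConvexOn A hA
  -- convexity of the integral part composed with each coordinate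
  have hint : ConvexOn ℝ (Set.univ : Set (Fin n → ℝ))
      (fun η : Fin n → ℝ => ∑ m, -∫ s in (0 : ℝ)..(η m), g m s) := by
    refine ⟨convex_univ, ?_⟩
    intro x _ y _ a c ha hc hac
    simp only [smul_eq_mul, Finset.mul_sum, ← Finset.sum_add_distrib]
    apply Finset.sum_le_sum
    intro m _
    have h := (neg_primitive_convexOn (hcont m) (hanti m)).2 (Set.mem_univ (x m))
      (Set.mem_univ (y m)) ha hc hac
    simpa using h
  have hlin : ConvexOn ℝ (Set.univ : Set (Fin n → ℝ))
      (fun η : Fin n → ℝ => -(b ⬝ᵥ η)) := by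
    refine ⟨convex_univ, ?_⟩
    intro x _ y _ a c ha hc hac
    have h : b ⬝ᵥ (a • x + c • y) = a * (b ⬝ᵥ x) + c * (b ⬝ᵥ y) := by
      simp [dotProduct_add, dotProduct_smul]
    simp only [smul_eq_mul, h]
    ring_nf
    exact le_rfl
  have final := (hquad.add_convexOn hint).add_convexOn hlin
  have heq : (fun η : Fin n → ℝ =>
        (1 / 2) * (η ⬝ᵥ A.mulVec η) - (∑ m, ∫ s in (0 : ℝ)..(η m), g m s) - b ⬝ᵥ η)
      = ((fun η : Fin n → ℝ => (1 / 2) * (η ⬝ᵥ A.mulVec η))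
          + fun η : Fin n → ℝ => ∑ m, -∫ s in (0 : ℝ)..(η m), g m s)
        + fun η : Fin n → ℝ => -(b ⬝ᵥ η) := by
    funext η
    simp [Pi.add_apply, sub_eq_add_neg, Finset.sum_neg_distrib]
  rw [heq]
  exact final
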